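/- Let X be a real or complex Banach space and U a subset of its unit sphere. Then the norm of X is uniformly strongly subdifferentiable on U (i.e. lim_{t→0⁺} sup{ (‖x+th‖−1)/t − τ(x,h) : h ∈ B_X, x ∈ U } = 0, where τ(x,h) = sup{ Re f(h) : f ∈ S_{X*}, f(x)=1 }) if and only if the pair (X, 𝕂) has the Bishop–Phelps–Bollobás point property for the set U, i.e. for every ε>0 there exists η(ε)>0 such that whenever x* ∈ S_{X*} and u ∈ U satisfy |x*(u)| > 1−η(ε), there exists x₂* ∈ S_{X*} with |x₂*(u)| = 1 and ‖x*−x₂*‖ < ε. -/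

import Mathlib

open Filter Topology

section AuxUSSD

open RCLike NormedSpace Set

variable {𝕜 X : Type*} [RCLike 𝕜] [NormedAddCommGroup X] [NormedSpace 𝕜 X] [CompleteSpace X]

/-- From `δ < ‖φ‖` extract a point in the ball where the real part is big. -/
lemma aux_exists_point (φ : X →L[𝕜] 𝕜) {δ : ℝ} (hδ : 0 ≤ δ) (h : δ < ‖φ‖) :
    ∃ y : X, ‖y‖ ≤ 1 ∧ δ < re (φ y) := by
  have : ¬ (∀ x, ‖φ x‖ ≤ δ * ‖x‖) := fun hb => absurd (φ.opNorm_le_bound hδ hb) (not_le.2 h)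
  push_neg at this
  obtain ⟨x, hx⟩ := this
  have hx0 : x ≠ 0 := by
    rintro rfl; simp only [map_zero, norm_zero] at hx
    exact absurd hx (not_lt.2 (by positivity))
  have hnx : (0:ℝ) < ‖x‖ := norm_pos_iff.2 hx0
  have hy₀n : ‖((‖x‖⁻¹ : ℝ) : 𝕜) • x‖ = 1 := by
    rw [norm_smul, RCLike.norm_ofReal, abs_of_nonneg (by positivity), inv_mul_cancel₀ hnx.ne']
  set y₀ : X := ((‖x‖⁻¹ : ℝ) : 𝕜) • x with hy₀
  have hφy₀ : δ < ‖φ y₀‖ := by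
    rw [hy₀, map_smul, norm_smul, RCLike.norm_ofReal, abs_of_nonneg (by positivity)]
    calc δ < ‖φ x‖ / ‖x‖ := (lt_div_iff₀ hnx).2 (by linarith [hx])
    _ = ‖x‖⁻¹ * ‖φ x‖ := by rw [div_eq_inv_mul]
  set w : 𝕜 := φ y₀ with hw
  have hw0 : w ≠ 0 := by
    intro h0; rw [h0, norm_zero] at hφy₀; exact absurd hφy₀ hδ.not_gt
  refine ⟨(starRingEnd 𝕜 w / (‖w‖ : 𝕜)) • y₀, ?_, ?_⟩
  · rw [norm_smul, hy₀n, mul_one, norm_div, RCLike.norm_conj, RCLike.norm_ofReal,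
      abs_of_nonneg (norm_nonneg _), div_self (norm_ne_zero_iff.2 hw0)]
  · rw [map_smul, smul_eq_mul, div_mul_eq_mul_div, RCLike.conj_mul]
    have h2 : ((‖w‖:𝕜))^2 / (‖w‖:𝕜) = ((‖w‖:𝕜)) := by
      rw [sq]
      rw [mul_div_assoc, div_self (by exact_mod_cast (norm_ne_zero_iff.2 hw0)), mul_one]
    rw [h2, RCLike.ofReal_re]
    exact hφy₀

set_option maxHeartbeats 1000000 in
lemma aux_sep (u : X) (hu : ‖u‖ = 1) (f : X →L[𝕜] 𝕜) {δ : ℝ} (hδ : 0 < δ)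
    (H : ∀ g : X →L[𝕜] 𝕜, ‖g‖ ≤ 1 → g u = 1 → δ < ‖f - g‖) :
    ∃ h : X, ‖h‖ ≤ 1 ∧ ∀ g : X →L[𝕜] 𝕜, ‖g‖ ≤ 1 → g u = 1 → δ ≤ re (f h) - re (g h) := by
  classical
  set K : Set (WeakDual 𝕜 X) := {g | ‖WeakDual.toStrongDual g‖ ≤ 1 ∧ g u = 1} with hKdef
  have hKc : IsCompact K := by
    have hKeq : K = (WeakDual.toStrongDual ⁻¹' Metric.closedBall 0 1) ∩ {g | g u = 1} := by
      ext g; simp [hKdef, mem_closedBall_zero_iff]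
    rw [hKeq]
    exact (WeakDual.isCompact_closedBall (𝕜 := 𝕜) 0 1).inter_right
      (isClosed_eq (WeakDual.eval_continuous u) continuous_const)
  -- a norming functional for u
  obtain ⟨g₀, hg₀n, hg₀u⟩ := exists_dual_vector 𝕜 u (by rw [← norm_pos_iff, hu]; norm_num)
  have hg₀u1 : g₀ u = 1 := by rw [hg₀u, hu, RCLike.ofReal_one]
  have hg₀K : StrongDual.toWeakDual g₀ ∈ K := ⟨by simp [hg₀n], hg₀u1⟩
  -- the open cover
  set V : {y : X // ‖y‖ ≤ 1} → Set (WeakDual 𝕜 X) :=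
    fun y => {g | re (g y.1) < re (f y.1) - δ} with hVdef
  have hVopen : ∀ y, IsOpen (V y) := fun y =>
    isOpen_lt (RCLike.continuous_re.comp (WeakDual.eval_continuous y.1)) continuous_const
  have hcover : K ⊆ ⋃ y, V y := by
    intro g hg
    have hgnorm : ‖WeakDual.toStrongDual g‖ ≤ 1 := hg.1
    have hgu : (WeakDual.toStrongDual g) u = 1 := hg.2
    obtain ⟨y, hy1, hy2⟩ := aux_exists_point (f - WeakDual.toStrongDual g) hδ.le
      (H (WeakDual.toStrongDual g) hgnorm hgu)
    refine Set.mem_iUnion.2 ⟨⟨y, hy1⟩, ?_⟩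
    have : re ((f - WeakDual.toStrongDual g) y) = re (f y) - re (g y) := by
      rw [ContinuousLinearMap.sub_apply, map_sub]; rfl
    rw [this] at hy2
    simp only [hVdef, Set.mem_setOf_eq]; linarith
  obtain ⟨s, hs⟩ := hKc.elim_finite_subcover V hVopen hcover
  -- finite-dimensional setup
  set Φ : WeakDual 𝕜 X → (↥s → ℝ) := fun g i => re (f i.1.1) - re (g i.1.1) with hΦdef
  have hΦcont : Continuous Φ := continuous_pi fun i =>
    continuous_const.sub (RCLike.continuous_re.comp (WeakDual.eval_continuous i.1.1))
  set K' : Set (↥s → ℝ) := Φ '' K with hK'def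
  have hK'comp : IsCompact K' := hKc.image hΦcont
  have happly : ∀ (a b : ℝ) (g₁ g₂ : WeakDual 𝕜 X) (z : X),
      (((a:𝕜)) • g₁ + ((b:𝕜)) • g₂) z = (a:𝕜) * g₁ z + (b:𝕜) * g₂ z := fun a b g₁ g₂ z => rfl
  have hK'conv : Convex ℝ K' := by
    rintro - ⟨g₁, hg₁, rfl⟩ - ⟨g₂, hg₂, rfl⟩ a b ha hb hab
    refine ⟨((a:𝕜)) • g₁ + ((b:𝕜)) • g₂, ⟨?_, ?_⟩, ?_⟩
    · rw [map_add, map_smul, map_smul]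
      calc ‖(a:𝕜) • WeakDual.toStrongDual g₁ + (b:𝕜) • WeakDual.toStrongDual g₂‖
          ≤ ‖(a:𝕜) • WeakDual.toStrongDual g₁‖ + ‖(b:𝕜) • WeakDual.toStrongDual g₂‖ :=
            norm_add_le _ _
        _ ≤ a * 1 + b * 1 := by
            rw [norm_smul, norm_smul, RCLike.norm_ofReal, RCLike.norm_ofReal,
              abs_of_nonneg ha, abs_of_nonneg hb]
            gcongr
            exacts [hg₁.1, hg₂.1]
        _ = 1 := by linarith
    · rw [happly, hg₁.2, hg₂.2, mul_one, mul_one, ← RCLike.ofReal_add, hab, RCLike.ofReal_one]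
    · funext i
      simp only [hΦdef, Pi.add_apply, Pi.smul_apply, smul_eq_mul, happly, map_add,
        re_ofReal_mul]
      linear_combination (- re (f (i.1.1 : X))) * hab
  have hboxconv : Convex ℝ {y : ↥s → ℝ | ∀ i, y i ≤ δ} := by
    intro y hy z hz a b ha hb hab i
    have h1 : a * y i + b * z i ≤ a * δ + b * δ := by
      gcongr; exacts [hy i, hz i]
    have h2 : a * δ + b * δ = δ := by linear_combination δ * hab
    simpa [smul_eq_mul] using h1.trans_eq h2
  
  have hboxclosed : IsClosed {y : ↥s → ℝ | ∀ i, y i ≤ δ} := by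
    have : {y : ↥s → ℝ | ∀ i, y i ≤ δ} = ⋂ i, {y | y i ≤ δ} := by
      ext y; simp
    rw [this]
    exact isClosed_iInter fun i => isClosed_le (continuous_apply i) continuous_const
  have hdisj : Disjoint {y : ↥s → ℝ | ∀ i, y i ≤ δ} K' := by
    rw [Set.disjoint_right]
    rintro - ⟨g, hg, rfl⟩ hbox
    obtain ⟨i, hi, hgV⟩ := Set.mem_iUnion₂.1 (hs hg)
    have h1 : Φ g ⟨i, hi⟩ ≤ δ := hbox ⟨i, hi⟩
    simp only [hVdef, Set.mem_setOf_eq] at hgV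
    simp only [hΦdef] at h1
    linarith
  obtain ⟨φ, uu, vv, hbox, huv, hK'sep⟩ :=
    _root_.geometric_hahn_banach_closed_compact hboxconv hboxclosed hK'conv hK'comp hdisj
  set c : ↥s → ℝ := fun i => φ (Pi.single i 1) with hcdef
  have hrepr : ∀ y : ↥s → ℝ, φ y = ∑ i, y i * c i := by
    intro y
    conv_lhs => rw [← Finset.univ_sum_single y]
    rw [map_sum]
    refine Finset.sum_congr rfl fun i _ => ?_
    have h2 : Pi.single i (y i) = y i • (Pi.single i (1:ℝ) : ↥s → ℝ) := by
      rw [← Pi.single_smul, smul_eq_mul, mul_one]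
    rw [h2, map_smul, smul_eq_mul, hcdef]
  have hδ0 : (0:ℝ) ≤ δ := hδ.le
  have hc : ∀ i, 0 ≤ c i := by
    intro i
    by_contra hci
    push_neg at hci
    set M : ℝ := (|uu| + 1) / (-c i) with hM
    have hM0 : 0 ≤ M := div_nonneg (by positivity) (by linarith)
    have hmem : (Pi.single i (-M) : ↥s → ℝ) ∈ {y : ↥s → ℝ | ∀ j, y j ≤ δ} := by
      intro j
      rcases eq_or_ne j i with rfl | hji
      · simp only [Pi.single_eq_same]; linarith
      · rw [Pi.single_eq_of_ne hji]; exact hδ0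
    have := hbox _ hmem
    rw [hrepr] at this
    have hsum : ∑ j, (Pi.single i (-M) : ↥s → ℝ) j * c j = (-M) * c i := by
      rw [Finset.sum_eq_single i]
      · simp
      · intro j _ hji; rw [Pi.single_eq_of_ne hji, zero_mul]
      · intro hi; exact absurd (Finset.mem_univ i) hi
    rw [hsum] at this
    have : (|uu| + 1) ≤ uu := by
      have h3 : (-M) * c i = M * (-c i) := by ring
      rw [h3, hM, div_mul_cancel₀ _ (by linarith : -c i ≠ 0)] at this
      linarith
    linarith [le_abs_self uu]
  set Sc : ℝ := ∑ i, c i with hScdef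
  have hSc0 : 0 ≤ Sc := Finset.sum_nonneg fun i _ => hc i
  have hK'g₀ : Φ (StrongDual.toWeakDual g₀) ∈ K' := ⟨_, hg₀K, rfl⟩
  have hSc : 0 < Sc := by
    rcases hSc0.lt_or_eq with h | h
    · exact h
    · exfalso
      have hall : ∀ i ∈ Finset.univ, c i = 0 :=
        (Finset.sum_eq_zero_iff_of_nonneg fun i _ => hc i).1 h.symm
      have hφ0 : ∀ y : ↥s → ℝ, φ y = 0 := by
        intro y; rw [hrepr]
        exact Finset.sum_eq_zero fun i hi => by rw [hall i hi, mul_zero]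
      have h1 : φ (fun _ => δ) < uu := hbox _ (fun i => le_refl δ)
      have h2 : vv < φ (Φ (StrongDual.toWeakDual g₀)) := hK'sep _ hK'g₀
      rw [hφ0] at h1 h2
      linarith
  have hδSc : δ * Sc < uu := by
    have h1 : φ (fun _ => δ) < uu := hbox _ (fun i => le_refl δ)
    rw [hrepr] at h1
    calc δ * Sc = ∑ i, δ * c i := by rw [hScdef, Finset.mul_sum]
    _ < uu := by simpa using h1
  refine ⟨∑ i, (((c i / Sc : ℝ)) : 𝕜) • (i.1.1 : X), ?_, ?_⟩
  · calc ‖∑ i, (((c i / Sc : ℝ)) : 𝕜) • (i.1.1 : X)‖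
        ≤ ∑ i, ‖(((c i / Sc : ℝ)) : 𝕜) • (i.1.1 : X)‖ := norm_sum_le _ _
      _ ≤ ∑ i, c i / Sc := by
          refine Finset.sum_le_sum fun i _ => ?_
          rw [norm_smul, RCLike.norm_ofReal, abs_of_nonneg (div_nonneg (hc i) hSc0)]
          calc c i / Sc * ‖(i.1.1 : X)‖ ≤ c i / Sc * 1 :=
                mul_le_mul_of_nonneg_left i.1.2 (div_nonneg (hc i) hSc0)
          _ = c i / Sc := mul_one _
      _ = 1 := by rw [← Finset.sum_div, ← hScdef, div_self hSc.ne']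
  · intro g hg1 hg2
    have hgK : StrongDual.toWeakDual g ∈ K := ⟨by simpa using hg1, hg2⟩
    have h1 : vv < φ (Φ (StrongDual.toWeakDual g)) := hK'sep _ ⟨_, hgK, rfl⟩
    rw [hrepr] at h1
    have hsum : ∀ (F : X →L[𝕜] 𝕜), re (F (∑ i, (((c i / Sc : ℝ)) : 𝕜) • (i.1.1 : X)))
        = ∑ i, (c i / Sc) * re (F (i.1.1 : X)) := by
      intro F
      rw [map_sum, map_sum re (fun i : ↥s => F ((((c i / Sc : ℝ)) : 𝕜) • (i.1.1 : X)))
        Finset.univ]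
      refine Finset.sum_congr rfl fun i _ => ?_
      rw [map_smul, smul_eq_mul, re_ofReal_mul]
    rw [hsum f, hsum g]
    have key : δ * Sc < ∑ i, (re (f i.1.1) - re (g i.1.1)) * c i := by
      have h2 : ∑ i, Φ (StrongDual.toWeakDual g) i * c i
          = ∑ i, (re (f i.1.1) - re (g i.1.1)) * c i := rfl
      rw [h2] at h1
      linarith
    have h3 : (∑ i, (re (f i.1.1) - re (g i.1.1)) * c i) / Sc
        = ∑ i, (c i / Sc) * re (f i.1.1) - ∑ i, (c i / Sc) * re (g i.1.1) := by
      rw [Finset.sum_div, ← Finset.sum_sub_distrib]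
      congr 1; funext i; ring
    have h4 : δ < (∑ i, (re (f i.1.1) - re (g i.1.1)) * c i) / Sc :=
      (lt_div_iff₀ hSc).2 (by linarith [key])
    linarith [h4, h3.le, h3.ge]

lemma aux_bdd (x h : X) :
    BddAbove {s : ℝ | ∃ f : X →L[𝕜] 𝕜, ‖f‖ = 1 ∧ f x = 1 ∧ s = re (f h)} := by
  refine ⟨‖h‖, ?_⟩
  rintro s ⟨f, hf1, hf2, rfl⟩
  calc re (f h) ≤ ‖f h‖ := re_le_norm _
  _ ≤ ‖f‖ * ‖h‖ := f.le_opNorm h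
  _ = ‖h‖ := by rw [hf1, one_mul]

lemma aux_norming (x : X) (hx : ‖x‖ = 1) : ∃ g : X →L[𝕜] 𝕜, ‖g‖ = 1 ∧ g x = 1 := by
  obtain ⟨g, hg1, hg2⟩ := exists_dual_vector 𝕜 x (by rw [← norm_pos_iff, hx]; norm_num)
  exact ⟨g, hg1, by rw [hg2, hx, RCLike.ofReal_one]⟩

lemma aux_neg_one_le (x : X) (hx : ‖x‖ = 1) (h : X) (hh : ‖h‖ ≤ 1) :
    -1 ≤ sSup {s : ℝ | ∃ f : X →L[𝕜] 𝕜, ‖f‖ = 1 ∧ f x = 1 ∧ s = re (f h)} := by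
  obtain ⟨g, hg1, hg2⟩ := aux_norming (𝕜 := 𝕜) x hx
  refine le_trans ?_ (le_csSup (aux_bdd x h) ⟨g, hg1, hg2, rfl⟩)
  have h1 : |re (g h)| ≤ 1 := by
    calc |re (g h)| ≤ ‖g h‖ := abs_re_le_norm _
    _ ≤ ‖g‖ * ‖h‖ := g.le_opNorm h
    _ ≤ 1 := by rw [hg1, one_mul]; exact hh
  linarith [(abs_le.1 h1).1]

lemma aux_tau_le_quot (x : X) (hx : ‖x‖ = 1) (h : X) {t : ℝ} (ht : 0 < t) :
    sSup {s : ℝ | ∃ f : X →L[𝕜] 𝕜, ‖f‖ = 1 ∧ f x = 1 ∧ s = re (f h)}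
      ≤ (‖x + (t : 𝕜) • h‖ - 1) / t := by
  obtain ⟨g₀, hg₀⟩ := aux_norming (𝕜 := 𝕜) x hx
  refine csSup_le ⟨re (g₀ h), g₀, hg₀.1, hg₀.2, rfl⟩ ?_
  rintro s ⟨f, hf1, hf2, rfl⟩
  rw [le_div_iff₀ ht]
  have h2 : f (x + (t:𝕜) • h) = 1 + (t:𝕜) * f h := by
    rw [map_add, map_smul, hf2, smul_eq_mul]
  have h3 : re (f (x + (t:𝕜) • h)) = 1 + t * re (f h) := by
    rw [h2, map_add, re_ofReal_mul]
    simp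
  have h4 : re (f (x + (t:𝕜) • h)) ≤ ‖x + (t:𝕜) • h‖ := by
    calc re (f (x + (t:𝕜) • h)) ≤ ‖f (x + (t:𝕜) • h)‖ := re_le_norm _
    _ ≤ ‖f‖ * ‖x + (t:𝕜) • h‖ := f.le_opNorm _
    _ = ‖x + (t:𝕜) • h‖ := by rw [hf1, one_mul]
  have : t * re (f h) = re (f h) * t := mul_comm _ _
  linarith

end AuxUSSD

open RCLike NormedSpace in
set_option maxHeartbeats 1000000 in
/-- For a Banach space `X` over `𝕜 = ℝ` or `ℂ` and a subset `U` of its unit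
sphere, the norm of `X` is uniformly strongly subdifferentiable on `U`, i.e.
`lim_{t→0⁺} sup { (‖x+th‖−1)/t − τ(x,h) : h ∈ B_X, x ∈ U } = 0` where
`τ(x,h) = sup { Re f(h) : f ∈ S_{X*}, f(x)=1 }`, if and only if the pair `(X, 𝕜)` has the
Bishop–Phelps–Bollobás point property for the set `U`. -/
theorem stmt_0 {𝕜 X : Type*} [RCLike 𝕜] [NormedAddCommGroup X] [NormedSpace 𝕜 X]
    [CompleteSpace X] (U : Set X) (hU : ∀ x ∈ U, ‖x‖ = 1) :
    Tendsto (fun t : ℝ =>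
        sSup {r : ℝ | ∃ x ∈ U, ∃ h : X, ‖h‖ ≤ 1 ∧
          r = (‖x + (t : 𝕜) • h‖ - 1) / t -
            sSup {s : ℝ | ∃ f : X →L[𝕜] 𝕜, ‖f‖ = 1 ∧ f x = 1 ∧ s = RCLike.re (f h)}})
      (nhdsWithin 0 (Set.Ioi 0)) (nhds 0)
    ↔
    ∀ ε > (0 : ℝ), ∃ η > (0 : ℝ), ∀ f : X →L[𝕜] 𝕜, ‖f‖ = 1 → ∀ u ∈ U, ‖f u‖ > 1 - η →
      ∃ g : X →L[𝕜] 𝕜, ‖g‖ = 1 ∧ ‖g u‖ = 1 ∧ ‖f - g‖ < ε := by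
  constructor
  · -- USSD implies BPB point property
    intro hT ε hε
    rw [Metric.tendsto_nhdsWithin_nhds] at hT
    obtain ⟨d, hd, hball⟩ := hT (ε/8) (by positivity)
    set t : ℝ := min (d/2) (1/2) with htdef
    have ht0 : 0 < t := lt_min (by linarith) one_half_pos
    have htd : dist t 0 < d := by
      rw [Real.dist_eq, sub_zero, abs_of_pos ht0]
      exact lt_of_le_of_lt (min_le_left _ _) (by linarith)
    have hsup := hball (Set.mem_Ioi.2 ht0) htd
    rw [Real.dist_eq, sub_zero] at hsup
    have hbdd : BddAbove {r : ℝ | ∃ x ∈ U, ∃ h : X, ‖h‖ ≤ 1 ∧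
        r = (‖x + (t : 𝕜) • h‖ - 1) / t -
          sSup {s : ℝ | ∃ f : X →L[𝕜] 𝕜, ‖f‖ = 1 ∧ f x = 1 ∧ s = RCLike.re (f h)}} := by
      refine ⟨2, ?_⟩
      rintro r ⟨x, hx, h, hh, rfl⟩
      have hx1 := hU x hx
      have hq : (‖x + (t:𝕜) • h‖ - 1) / t ≤ 1 := by
        rw [div_le_one ht0]
        have hnn : ‖x + (t:𝕜) • h‖ ≤ 1 + t := by
          calc ‖x + (t:𝕜) • h‖ ≤ ‖x‖ + ‖(t:𝕜) • h‖ := norm_add_le _ _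
          _ = 1 + t * ‖h‖ := by rw [hx1, norm_smul, RCLike.norm_ofReal, abs_of_pos ht0]
          _ ≤ 1 + t * 1 := by nlinarith [ht0]
          _ = 1 + t := by ring
        linarith
      linarith [aux_neg_one_le (𝕜 := 𝕜) x hx1 h hh]
    have key : ∀ x ∈ U, ∀ h : X, ‖h‖ ≤ 1 →
        (‖x + (t : 𝕜) • h‖ - 1) / t -
          sSup {s : ℝ | ∃ f : X →L[𝕜] 𝕜, ‖f‖ = 1 ∧ f x = 1 ∧ s = RCLike.re (f h)} < ε/8 := by
      intro x hx h hh
      calc (‖x + (t : 𝕜) • h‖ - 1) / t -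
          sSup {s : ℝ | ∃ f : X →L[𝕜] 𝕜, ‖f‖ = 1 ∧ f x = 1 ∧ s = RCLike.re (f h)}
          ≤ sSup {r : ℝ | ∃ x ∈ U, ∃ h : X, ‖h‖ ≤ 1 ∧
            r = (‖x + (t : 𝕜) • h‖ - 1) / t -
              sSup {s : ℝ | ∃ f : X →L[𝕜] 𝕜, ‖f‖ = 1 ∧ f x = 1 ∧ s = RCLike.re (f h)}} :=
            le_csSup hbdd ⟨x, hx, h, hh, rfl⟩
      _ ≤ |sSup {r : ℝ | ∃ x ∈ U, ∃ h : X, ‖h‖ ≤ 1 ∧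
            r = (‖x + (t : 𝕜) • h‖ - 1) / t -
              sSup {s : ℝ | ∃ f : X →L[𝕜] 𝕜, ‖f‖ = 1 ∧ f x = 1 ∧ s = RCLike.re (f h)}}| :=
            le_abs_self _
      _ < ε/8 := hsup
    refine ⟨min (t*(ε/8)) (1/2), lt_min (by positivity) one_half_pos, ?_⟩
    intro f hf u hu hfu
    have hu1 := hU u hu
    have hfu2 : 1 - t*(ε/8) < ‖f u‖ := by
      have h1 : min (t*(ε/8)) (1/2) ≤ t*(ε/8) := min_le_left _ _
      linarith [hfu]
    have hfu3 : (1:ℝ)/2 < ‖f u‖ := by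
      have h1 : min (t*(ε/8)) (1/2) ≤ 1/2 := min_le_right _ _
      linarith [hfu]
    have hfu0 : f u ≠ 0 := by
      intro h0; rw [h0, norm_zero] at hfu3; linarith
    set c : 𝕜 := (‖f u‖ : 𝕜) / f u with hcdef
    have hc : ‖c‖ = 1 := by
      rw [hcdef, norm_div, RCLike.norm_ofReal, abs_of_nonneg (norm_nonneg _),
        div_self (norm_ne_zero_iff.2 hfu0)]
    set f₁ : X →L[𝕜] 𝕜 := c • f with hf₁def
    have hf₁ : ‖f₁‖ = 1 := by rw [hf₁def, norm_smul c f, hc, one_mul, hf]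
    have hf₁u : f₁ u = (‖f u‖ : 𝕜) := by
      rw [hf₁def, ContinuousLinearMap.smul_apply, hcdef, smul_eq_mul, div_mul_cancel₀ _ hfu0]
    have hclaim : ∀ h : X, ‖h‖ ≤ 1 → re (f₁ h) ≤
        sSup {s : ℝ | ∃ f' : X →L[𝕜] 𝕜, ‖f'‖ = 1 ∧ f' u = 1 ∧ s = RCLike.re (f' h)} + ε/4 := by
      intro h hh
      set T := sSup {s : ℝ | ∃ f' : X →L[𝕜] 𝕜, ‖f'‖ = 1 ∧ f' u = 1 ∧ s = RCLike.re (f' h)}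
        with hTdef
      have h1 : re (f₁ (u + (t:𝕜) • h)) ≤ ‖u + (t:𝕜) • h‖ := by
        calc re (f₁ (u + (t:𝕜) • h)) ≤ ‖f₁ (u + (t:𝕜) • h)‖ := re_le_norm _
        _ ≤ ‖f₁‖ * ‖u + (t:𝕜) • h‖ := f₁.le_opNorm _
        _ = ‖u + (t:𝕜) • h‖ := by rw [hf₁, one_mul]
      have h3 : re (f₁ (u + (t:𝕜) • h)) = ‖f u‖ + t * re (f₁ h) := by
        rw [map_add, map_smul, map_add, hf₁u, RCLike.ofReal_re, smul_eq_mul, re_ofReal_mul]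
      have h4 : ‖u + (t:𝕜) • h‖ - 1 < t * (T + ε/8) := by
        have h5 := key u hu h hh
        rw [← hTdef] at h5
        have h6 : (‖u + (t:𝕜) • h‖ - 1) / t < T + ε/8 := by linarith
        calc ‖u + (t:𝕜) • h‖ - 1 = ((‖u + (t:𝕜) • h‖ - 1)/t) * t := by
              field_simp
        _ < (T + ε/8) * t := by
              exact mul_lt_mul_of_pos_right h6 ht0
        _ = t * (T + ε/8) := mul_comm _ _
      have h7 : t * re (f₁ h) < t * (T + ε/4) := by nlinarith [hfu2, h1, h3, h4, ht0]
      have h8 : re (f₁ h) < T + ε/4 := (mul_lt_mul_iff_right₀ ht0).1 h7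
      linarith
    by_contra hcon
    push_neg at hcon
    have hsep : ∀ g₁ : X →L[𝕜] 𝕜, ‖g₁‖ ≤ 1 → g₁ u = 1 → ε/2 < ‖f₁ - g₁‖ := by
      intro g₁ hg₁ hg₁u
      by_contra hle
      push_neg at hle
      have hg₁n : ‖g₁‖ = 1 := by
        refine le_antisymm hg₁ ?_
        calc (1:ℝ) = ‖g₁ u‖ := by rw [hg₁u, norm_one]
        _ ≤ ‖g₁‖ * ‖u‖ := g₁.le_opNorm u
        _ = ‖g₁‖ := by rw [hu1, mul_one]
      set g : X →L[𝕜] 𝕜 := starRingEnd 𝕜 c • g₁ with hgdef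
      have hgn : ‖g‖ = 1 := by rw [hgdef, norm_smul (starRingEnd 𝕜 c) g₁, RCLike.norm_conj, hc, one_mul, hg₁n]
      have hgu : ‖g u‖ = 1 := by
        rw [hgdef, ContinuousLinearMap.smul_apply, hg₁u, smul_eq_mul, mul_one,
          RCLike.norm_conj, hc]
      have hfg : f - g = starRingEnd 𝕜 c • (f₁ - g₁) := by
        rw [smul_sub, hgdef]
        congr 1
        rw [hf₁def, smul_smul, RCLike.conj_mul, hc]
        norm_num
      have hfgle : ‖f - g‖ ≤ ε/2 := by
        rw [hfg, norm_smul (starRingEnd 𝕜 c) (f₁ - g₁), RCLike.norm_conj, hc, one_mul]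
        exact hle
      linarith [hcon g hgn hgu]
    obtain ⟨h, hh1, hh2⟩ := aux_sep u hu1 f₁ (by positivity : (0:ℝ) < ε/2) hsep
    obtain ⟨g₀, hg₀1, hg₀2⟩ := aux_norming (𝕜 := 𝕜) u hu1
    have hT1 : sSup {s : ℝ | ∃ f' : X →L[𝕜] 𝕜, ‖f'‖ = 1 ∧ f' u = 1 ∧ s = RCLike.re (f' h)}
        ≤ re (f₁ h) - ε/2 := by
      refine csSup_le ⟨re (g₀ h), g₀, hg₀1, hg₀2, rfl⟩ ?_
      rintro s ⟨g, hg1, hg2, rfl⟩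
      linarith [hh2 g hg1.le hg2]
    linarith [hclaim h hh1]
  · intro hB
    rw [Metric.tendsto_nhdsWithin_nhds]
    intro ε hε
    have hε'0 : 0 < min (ε/4) (ε^2/100) := lt_min (by positivity) (by positivity)
    obtain ⟨η, hη0, hBP⟩ := hB (min (ε/4) (ε^2/100)) hε'0
    refine ⟨min (min (η/2) (1/4)) (ε^2/100), lt_min (lt_min (by positivity) (by norm_num))
      (by positivity), ?_⟩
    intro t ht hdist
    have ht0 : 0 < t := Set.mem_Ioi.1 ht
    have htlt : t < min (min (η/2) (1/4)) (ε^2/100) := by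
      rwa [Real.dist_eq, sub_zero, abs_of_pos ht0] at hdist
    have ht1 : t < η/2 := lt_of_lt_of_le htlt ((min_le_left _ _).trans (min_le_left _ _))
    have ht2 : t < 1/4 := lt_of_lt_of_le htlt ((min_le_left _ _).trans (min_le_right _ _))
    have ht3 : t < ε^2/100 := lt_of_lt_of_le htlt (min_le_right _ _)
    have hε'1 : min (ε/4) (ε^2/100) ≤ ε/4 := min_le_left _ _
    have hε'2 : min (ε/4) (ε^2/100) ≤ ε^2/100 := min_le_right _ _
    rw [Real.dist_eq, sub_zero]
    have hub : ∀ r ∈ {r : ℝ | ∃ x ∈ U, ∃ h : X, ‖h‖ ≤ 1 ∧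
        r = (‖x + (t : 𝕜) • h‖ - 1) / t -
          sSup {s : ℝ | ∃ f : X →L[𝕜] 𝕜, ‖f‖ = 1 ∧ f x = 1 ∧ s = RCLike.re (f h)}},
        r ≤ 3*ε/4 := by
      rintro r ⟨x, hx, h, hh, rfl⟩
      have hx1 := hU x hx
      have hth : ‖(t:𝕜) • h‖ ≤ t := by
        rw [norm_smul, RCLike.norm_ofReal, abs_of_pos ht0]
        nlinarith [ht0]
      have hxth : (0:ℝ) < ‖x + (t:𝕜) • h‖ := by
        have h0 : ‖x‖ - ‖(t:𝕜) • h‖ ≤ ‖x + (t:𝕜) • h‖ := by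
          simpa [sub_neg_eq_add] using norm_sub_norm_le x (-((t:𝕜) • h))
        rw [hx1] at h0
        linarith
      obtain ⟨F, hF1, hFx⟩ := exists_dual_vector 𝕜 (x + (t:𝕜) • h) hxth.ne'
      have hFh : |re (F h)| ≤ 1 := by
        calc |re (F h)| ≤ ‖F h‖ := abs_re_le_norm _
        _ ≤ ‖F‖ * ‖h‖ := F.le_opNorm h
        _ ≤ 1 := by rw [hF1, one_mul]; exact hh
      have hFxval : re (F x) = ‖x + (t:𝕜) • h‖ - t * re (F h) := by
        have h9 : F x = F (x + (t:𝕜) • h) - (t:𝕜) * F h := by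
          rw [map_add, map_smul, smul_eq_mul]; ring
        rw [h9, map_sub, hFx, RCLike.ofReal_re, re_ofReal_mul]
      have hreFx_le : re (F x) ≤ 1 := by
        calc re (F x) ≤ ‖F x‖ := re_le_norm _
        _ ≤ ‖F‖ * ‖x‖ := F.le_opNorm x
        _ = 1 := by rw [hF1, hx1, mul_one]
      have hxth1 : 1 - t ≤ ‖x + (t:𝕜) • h‖ := by
        have h0 : ‖x‖ - ‖(t:𝕜) • h‖ ≤ ‖x + (t:𝕜) • h‖ := by
          simpa [sub_neg_eq_add] using norm_sub_norm_le x (-((t:𝕜) • h))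
        rw [hx1] at h0
        linarith
      have h5 : 1 - 2*t ≤ re (F x) := by
        have h6 : t * re (F h) ≤ t := by nlinarith [(abs_le.1 hFh).2, ht0]
        linarith
      have hFxnorm : ‖F x‖ > 1 - η := by
        calc 1 - η < 1 - 2*t := by linarith
        _ ≤ re (F x) := h5
        _ ≤ ‖F x‖ := re_le_norm _
      obtain ⟨G, hG1, hGx, hFG⟩ := hBP F hF1 x hx hFxnorm
      have hgn : ‖starRingEnd 𝕜 (G x) • G‖ = 1 := by
        rw [norm_smul (starRingEnd 𝕜 (G x)) G, RCLike.norm_conj, hGx, one_mul, hG1]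
      have hgx : (starRingEnd 𝕜 (G x) • G) x = 1 := by
        rw [ContinuousLinearMap.smul_apply, smul_eq_mul, RCLike.conj_mul, hGx]
        norm_num
      have hGxFx : ‖G x - F x‖ < min (ε/4) (ε^2/100) := by
        have h9 : G x - F x = (G - F) x := by rw [ContinuousLinearMap.sub_apply]
        rw [h9]
        calc ‖(G - F) x‖ ≤ ‖G - F‖ * ‖x‖ := (G - F).le_opNorm x
        _ = ‖F - G‖ := by rw [norm_sub_rev, hx1, mul_one]
        _ < min (ε/4) (ε^2/100) := hFG
      have hreGx : 1 - 2*t - min (ε/4) (ε^2/100) ≤ re (G x) := by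
        have h7 : |re (G x - F x)| ≤ ‖G x - F x‖ := abs_re_le_norm _
        rw [map_sub] at h7
        linarith [(abs_le.1 h7).1]
      have hGx1 : ‖G x - 1‖^2 ≤ 4*t + 2*(min (ε/4) (ε^2/100)) := by
        have hnorm : ‖G x - 1‖^2 = ‖G x‖^2 - 2*re (G x) + 1 := by
          have h10 := @norm_sub_sq 𝕜 𝕜 _ _ _ (G x) 1
          simpa [RCLike.inner_apply, RCLike.conj_re] using h10
        rw [hnorm, hGx]
        linarith
      have hGx2 : ‖G x - 1‖ ≤ ε/4 := by
        have h8 : ‖G x - 1‖^2 ≤ (ε/4)^2 := by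
          calc ‖G x - 1‖^2 ≤ 4*t + 2*(min (ε/4) (ε^2/100)) := hGx1
          _ ≤ 4*(ε^2/100) + 2*(ε^2/100) := by linarith
          _ ≤ (ε/4)^2 := by nlinarith [sq_nonneg ε]
        nlinarith [norm_nonneg (G x - 1), hε]
      have hGg : ‖G - starRingEnd 𝕜 (G x) • G‖ ≤ ε/4 := by
        have h11 : G - starRingEnd 𝕜 (G x) • G = (1 - starRingEnd 𝕜 (G x)) • G := by
          module
        rw [h11, norm_smul (1 - starRingEnd 𝕜 (G x)) G, hG1, mul_one]
        have h12 : (1 : 𝕜) - starRingEnd 𝕜 (G x) = starRingEnd 𝕜 (1 - G x) := by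
          rw [map_sub, map_one]
        rw [h12, RCLike.norm_conj, norm_sub_rev]
        exact hGx2
      have hFg : ‖F - starRingEnd 𝕜 (G x) • G‖ ≤ ε/4 + ε/4 := by
        have h13 : F - starRingEnd 𝕜 (G x) • G
            = (F - G) + (G - starRingEnd 𝕜 (G x) • G) := by abel
        calc ‖F - starRingEnd 𝕜 (G x) • G‖
            ≤ ‖F - G‖ + ‖G - starRingEnd 𝕜 (G x) • G‖ := by rw [h13]; exact norm_add_le _ _
        _ ≤ ε/4 + ε/4 := add_le_add (le_of_lt (lt_of_lt_of_le hFG hε'1)) hGg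
      have hgtau : re ((starRingEnd 𝕜 (G x) • G) h)
          ≤ sSup {s : ℝ | ∃ f : X →L[𝕜] 𝕜, ‖f‖ = 1 ∧ f x = 1 ∧ s = RCLike.re (f h)} :=
        le_csSup (aux_bdd x h) ⟨_, hgn, hgx, rfl⟩
      have hFh2 : (‖x + (t:𝕜) • h‖ - 1)/t ≤ re (F h) := by
        rw [div_le_iff₀ ht0]
        have : re (F h) * t = t * re (F h) := mul_comm _ _
        linarith
      have hdiff : re (F h) - re ((starRingEnd 𝕜 (G x) • G) h)
          ≤ ‖F - starRingEnd 𝕜 (G x) • G‖ := by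
        have h14 : re (F h) - re ((starRingEnd 𝕜 (G x) • G) h)
            = re ((F - starRingEnd 𝕜 (G x) • G) h) := by
          rw [ContinuousLinearMap.sub_apply, map_sub]
        rw [h14]
        calc re ((F - starRingEnd 𝕜 (G x) • G) h) ≤ ‖(F - starRingEnd 𝕜 (G x) • G) h‖ :=
              re_le_norm _
        _ ≤ ‖F - starRingEnd 𝕜 (G x) • G‖ * ‖h‖ := ContinuousLinearMap.le_opNorm _ h
        _ ≤ ‖F - starRingEnd 𝕜 (G x) • G‖ * 1 :=
              mul_le_mul_of_nonneg_left hh (norm_nonneg _)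
        _ = ‖F - starRingEnd 𝕜 (G x) • G‖ := mul_one _
      linarith
    have hlb : ∀ r ∈ {r : ℝ | ∃ x ∈ U, ∃ h : X, ‖h‖ ≤ 1 ∧
        r = (‖x + (t : 𝕜) • h‖ - 1) / t -
          sSup {s : ℝ | ∃ f : X →L[𝕜] 𝕜, ‖f‖ = 1 ∧ f x = 1 ∧ s = RCLike.re (f h)}},
        0 ≤ r := by
      rintro r ⟨x, hx, h, hh, rfl⟩
      linarith [aux_tau_le_quot (𝕜 := 𝕜) x (hU x hx) h ht0]
    have h1 : sSup {r : ℝ | ∃ x ∈ U, ∃ h : X, ‖h‖ ≤ 1 ∧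
        r = (‖x + (t : 𝕜) • h‖ - 1) / t -
          sSup {s : ℝ | ∃ f : X →L[𝕜] 𝕜, ‖f‖ = 1 ∧ f x = 1 ∧ s = RCLike.re (f h)}}
        ≤ 3*ε/4 := Real.sSup_le hub (by positivity)
    have h2 : 0 ≤ sSup {r : ℝ | ∃ x ∈ U, ∃ h : X, ‖h‖ ≤ 1 ∧
        r = (‖x + (t : 𝕜) • h‖ - 1) / t -
          sSup {s : ℝ | ∃ f : X →L[𝕜] 𝕜, ‖f‖ = 1 ∧ f x = 1 ∧ s = RCLike.re (f h)}} := by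
      rcases Set.eq_empty_or_nonempty {r : ℝ | ∃ x ∈ U, ∃ h : X, ‖h‖ ≤ 1 ∧
        r = (‖x + (t : 𝕜) • h‖ - 1) / t -
          sSup {s : ℝ | ∃ f : X →L[𝕜] 𝕜, ‖f‖ = 1 ∧ f x = 1 ∧ s = RCLike.re (f h)}}
        with he | ⟨r, hr⟩
      · rw [he, Real.sSup_empty]
      · exact le_trans (hlb r hr) (le_csSup ⟨3*ε/4, hub⟩ hr)
    rw [abs_of_nonneg h2]
    linarith
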